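/- (S_2^≠, S_2^≠, [1, ∞), [1, ∞))↓ holds: from every configuration in which both robots satisfy condition S_2^≠ with observed distances at least 1, every fair SSynch execution of Algorithm 1 solves rendezvous. -/

import Mathlib

/-- Points in the plane. -/
abbrev Pt := EuclideanSpace ℝ (Fin 2)

/-- Observed directions. -/
inductive Dir | left | right
deriving DecidableEq

/-- The six internal states of Algorithm 1. -/
inductive St | start | s1 | s2 (d : Dir) | s3 | finish
deriving DecidableEq

/-- A local coordinate frame: an orthogonal linear map of the plane. -/
abbrev Frame := Pt ≃ₗᵢ[ℝ] Pt

/-- Observed direction of a local vector `v`: `right` if its first coordinate is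
positive, or is zero with positive second coordinate; `left` otherwise. -/
noncomputable def obsDir (v : Pt) : Dir :=
  if 0 < v 0 ∨ (v 0 = 0 ∧ 0 < v 1) then Dir.right else Dir.left

/-- Local vector observed by a robot with unit distance `u` and frame `A`,
located at `p`, looking at the other robot at `q`. -/
noncomputable def obsVec (u : ℝ) (A : Frame) (p q : Pt) : Pt := u⁻¹ • (A (q - p))

/-- Observed distance. -/
noncomputable def obsDist (u : ℝ) (p q : Pt) : ℝ := ‖q - p‖ / u

/-- Algorithm 1: given the current state, the observed distance `d` and the
observed direction `dir`, returns the new state and the coefficient `μ` such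
that the (global) destination is `p + μ • (q - p)` (i.e. local destination `μ • v`). -/
noncomputable def algo1 (s : St) (d : ℝ) (dir : Dir) : St × ℝ :=
  if d = 0 then (s, 0)
  else match s with
  | .start => if d < 1 then (.s1, 1 - 1/d) else (.s2 dir, 1)
  | .s1 => if d ≤ 1 then (.finish, 0) else (.s2 dir, 1)
  | .s2 d' =>
      if dir = d' then (.finish, 1)
      else if d < 1/2 then (.finish, 0)
      else if d < 1 then (.s3, 1/2)
      else (.s2 d', 1/2)
  | .s3 => if d < 1/4 then (.finish, 0) else (.finish, 1)
  | .finish => if d ≤ 1 then (.finish, 0) else (.finish, 1)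

/-- A configuration: positions and internal states of the two robots
(robot `r` is `false`, robot `s` is `true`). -/
structure Config where
  pos : Bool → Pt
  st : Bool → St

/-- Result (new position, new state) of one activation of robot `i`. -/
noncomputable def stepRobot (u : Bool → ℝ) (A : Bool → Frame) (c : Config) (i : Bool) :
    Pt × St :=
  let p := c.pos i
  let q := c.pos (!i)
  let d := obsDist (u i) p q
  let dir := obsDir (obsVec (u i) (A i) p q)
  let r := algo1 (c.st i) d dir
  (p + r.2 • (q - p), r.1)

/-- One synchronous round in which exactly the robots `i` with `act i = true`
are activated; both activated robots observe the same (pre-round) configuration,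
and rigidly reach their computed destinations. -/
noncomputable def stepConfig (u : Bool → ℝ) (A : Bool → Frame) (act : Bool → Bool)
    (c : Config) : Config where
  pos i := if act i then (stepRobot u A c i).1 else c.pos i
  st i := if act i then (stepRobot u A c i).2 else c.st i

/-- The configuration after `n` rounds of the SSynch execution of Algorithm 1
under schedule `sched`, starting from `c0`. -/
noncomputable def run (u : Bool → ℝ) (A : Bool → Frame) (sched : ℕ → Bool → Bool)
    (c0 : Config) : ℕ → Config
  | 0 => c0
  | n + 1 => stepConfig u A (sched n) (run u A sched c0 n)

/-- A legal fair SSynch schedule: at every round a nonempty set of robots is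
activated, and each robot is activated infinitely often. -/
def FairSched (sched : ℕ → Bool → Bool) : Prop :=
  (∀ n, sched n false = true ∨ sched n true = true) ∧
  (∀ i n, ∃ m, n ≤ m ∧ sched m i = true)

/-- Rendezvous is solved: from some round on, the two robots occupy the same
point and never move again. -/
noncomputable def Solves (u : Bool → ℝ) (A : Bool → Frame) (sched : ℕ → Bool → Bool)
    (c0 : Config) : Prop :=
  ∃ N : ℕ, ∀ n, N ≤ n → ∀ i, (run u A sched c0 n).pos i = (run u A sched c0 N).pos false

/-- Conditions on a robot: one of the six internal states, or `S₂⁼` / `S₂≠`. -/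
inductive Cond | start | s1 | s2 (d : Dir) | s2eq | s2ne | s3 | finish

/-- A robot in state `s` whose currently observed direction is `dir`
satisfies the condition. -/
def Cond.sat : Cond → St → Dir → Prop
  | .start, s, _ => s = .start
  | .s1, s, _ => s = .s1
  | .s2 d', s, _ => s = .s2 d'
  | .s2eq, s, dir => s = .s2 dir
  | .s2ne, s, dir => ∃ d', s = St.s2 d' ∧ d' ≠ dir
  | .s3, s, _ => s = .s3
  | .finish, s, _ => s = .finish

/-- `(S_a, S_b, I_a, I_b)↓` : for every choice of the units and frames, from
every configuration in which robot `r` satisfies condition `Ca` with observed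
distance in `Ia` and robot `s` satisfies condition `Cb` with observed distance
in `Ib`, every fair SSynch execution of Algorithm 1 solves Rendezvous. -/
noncomputable def Down (Ca Cb : Cond) (Ia Ib : Set ℝ) : Prop :=
  ∀ (u : Bool → ℝ) (A : Bool → Frame), (∀ i, 0 < u i) →
    ∀ c0 : Config,
      Ca.sat (c0.st false)
        (obsDir (obsVec (u false) (A false) (c0.pos false) (c0.pos true))) →
      obsDist (u false) (c0.pos false) (c0.pos true) ∈ Ia →
      Cb.sat (c0.st true)
        (obsDir (obsVec (u true) (A true) (c0.pos true) (c0.pos false))) →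
      obsDist (u true) (c0.pos true) (c0.pos false) ∈ Ib →
      ∀ sched : ℕ → Bool → Bool, FairSched sched → Solves u A sched c0


namespace L2

def dflip : Dir → Dir | .left => .right | .right => .left

lemma dflip_ne (d : Dir) : dflip d ≠ d := by cases d <;> simp [dflip]

lemma dir_ne_iff {a b : Dir} : a ≠ b ↔ a = dflip b := by cases a <;> cases b <;> simp [dflip]

lemma Pt.eq_zero {v : Pt} (h0 : v 0 = 0) (h1 : v 1 = 0) : v = 0 := by
  ext i; fin_cases i <;> simpa

lemma mul_pos_iff_left {t x : ℝ} (ht : 0 < t) : 0 < t * x ↔ 0 < x := by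
  rw [mul_pos_iff]
  constructor
  · rintro (⟨_, h⟩ | ⟨h, _⟩)
    · exact h
    · linarith
  · intro h; exact Or.inl ⟨ht, h⟩

lemma obsDir_smul {t : ℝ} (ht : 0 < t) (v : Pt) : obsDir (t • v) = obsDir v := by
  have e0 : (t • v) 0 = t * v 0 := rfl
  have e1 : (t • v) 1 = t * v 1 := rfl
  unfold obsDir
  rw [e0, e1]
  congr 1
  rw [mul_pos_iff_left ht, mul_pos_iff_left ht, mul_eq_zero, eq_iff_iff]
  have := ht.ne'
  tauto

lemma obsDir_smul_neg {t : ℝ} (ht : t < 0) {v : Pt} (hv : v ≠ 0) :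
    obsDir (t • v) = dflip (obsDir v) := by
  have e0 : (t • v) 0 = t * v 0 := rfl
  have e1 : (t • v) 1 = t * v 1 := rfl
  unfold obsDir
  rw [e0, e1]
  rcases lt_trichotomy (v 0) 0 with h | h | h
  · rw [if_pos (Or.inl (mul_pos_of_neg_of_neg ht h)), if_neg (by rintro (h' | ⟨h', _⟩) <;> linarith)]
    rfl
  · rcases lt_trichotomy (v 1) 0 with h1 | h1 | h1
    · rw [if_pos (Or.inr ⟨by simp [h], by nlinarith⟩),
        if_neg (by rintro (h' | ⟨_, h'⟩) <;> linarith)]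
      rfl
    · exact absurd (Pt.eq_zero h h1) hv
    · rw [if_neg, if_pos (Or.inr ⟨h, h1⟩)]
      · rfl
      · rintro (h' | ⟨_, h'⟩)
        · nlinarith [mul_nonpos_of_nonpos_of_nonneg ht.le h.ge]
        · nlinarith
  · rw [if_neg, if_pos (Or.inl h)]
    · rfl
    · rintro (h' | ⟨h', _⟩)
      · nlinarith
      · nlinarith

/-! ### algo1 evaluation lemmas -/

lemma algo1_zero (s : St) (dir : Dir) : algo1 s 0 dir = (s, 0) := by simp [algo1]

lemma algo1_s2ne {d : ℝ} (dir : Dir) (hd : 0 < d) :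
    algo1 (.s2 (dflip dir)) d dir =
      if d < 1/2 then (.finish, 0) else if d < 1 then (.s3, 1/2) else (.s2 (dflip dir), 1/2) := by
  rw [algo1, if_neg hd.ne', ]
  simp [(dflip_ne dir).symm]

lemma algo1_s2eq {d : ℝ} (dir : Dir) (hd : 0 < d) :
    algo1 (.s2 dir) d dir = (.finish, 1) := by
  rw [algo1, if_neg hd.ne']
  simp

lemma algo1_s3 {d : ℝ} (dir : Dir) (hd : 0 < d) :
    algo1 .s3 d dir = if d < 1/4 then (.finish, 0) else (.finish, 1) := by
  rw [algo1, if_neg hd.ne']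

lemma algo1_finish_le {d : ℝ} (dir : Dir) (hd : d ≤ 1) :
    algo1 .finish d dir = (.finish, 0) := by
  rcases eq_or_ne d 0 with h | h
  · rw [h, algo1_zero]
  · rw [algo1, if_neg h]
    simp [hd]

/-! ### configuration-level abbreviations -/

variable (u : Bool → ℝ) (A : Bool → Frame)

/-- Observed distance of robot `i`. -/
noncomputable def di (c : Config) (i : Bool) : ℝ := obsDist (u i) (c.pos i) (c.pos (!i))

/-- Observed direction of robot `i`. -/
noncomputable def dd (c : Config) (i : Bool) : Dir :=
  obsDir (obsVec (u i) (A i) (c.pos i) (c.pos (!i)))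

/-- The global vector from robot `false` to robot `true`. -/
noncomputable def Δ (c : Config) : Pt := c.pos true - c.pos false

lemma sub_eq_delta (c : Config) (i : Bool) :
    c.pos (!i) - c.pos i = (if i then (-1:ℝ) else 1) • Δ c := by
  cases i <;> simp [Δ]

lemma di_eq (c : Config) (i : Bool) : di u c i = ‖Δ c‖ / u i := by
  rw [di, obsDist, sub_eq_delta, norm_smul]
  cases i <;> simp

lemma stepRobot_eq (c : Config) (i : Bool) :
    stepRobot u A c i =
      (c.pos i + (algo1 (c.st i) (di u c i) (dd u A c i)).2 • (c.pos (!i) - c.pos i),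
       (algo1 (c.st i) (di u c i) (dd u A c i)).1) := rfl

lemma stepConfig_pos (act : Bool → Bool) (c : Config) (i : Bool) :
    (stepConfig u A act c).pos i = if act i then (stepRobot u A c i).1 else c.pos i := rfl

lemma stepConfig_st (act : Bool → Bool) (c : Config) (i : Bool) :
    (stepConfig u A act c).st i = if act i then (stepRobot u A c i).2 else c.st i := rfl

/-- Effective movement coefficient of robot `i` in a round. -/
noncomputable def mc (act : Bool → Bool) (c : Config) (i : Bool) : ℝ :=
  if act i then (algo1 (c.st i) (di u c i) (dd u A c i)).2 else 0

lemma delta_step (act : Bool → Bool) (c : Config) :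
    Δ (stepConfig u A act c) = (1 - mc u A act c false - mc u A act c true) • Δ c := by
  rw [Δ, stepConfig_pos, stepConfig_pos, mc, mc]
  cases hf : act false <;> cases ht : act true <;>
    simp only [hf, ht, stepRobot_eq, Bool.not_false, Bool.not_true, ite_true, ite_false,
      Bool.false_eq_true, Bool.true_eq_false, Δ] <;> module

lemma st_step (act : Bool → Bool) (c : Config) (i : Bool) (h : act i = true) :
    (stepConfig u A act c).st i = (algo1 (c.st i) (di u c i) (dd u A c i)).1 := by
  rw [stepConfig_st, if_pos h, stepRobot_eq]

lemma st_step_off (act : Bool → Bool) (c : Config) (i : Bool) (h : act i = false) :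
    (stepConfig u A act c).st i = c.st i := by
  rw [stepConfig_st, h]; rfl

/-! ### transport of observations along a round -/

lemma obsVec_smul {c c' : Config} {t : ℝ} (h : Δ c' = t • Δ c) (i : Bool) :
    obsVec (u i) (A i) (c'.pos i) (c'.pos (!i)) =
      t • obsVec (u i) (A i) (c.pos i) (c.pos (!i)) := by
  rw [obsVec, obsVec, sub_eq_delta, sub_eq_delta, h, map_smul, map_smul, map_smul]
  module

lemma di_smul {c c' : Config} {t : ℝ} (h : Δ c' = t • Δ c) (i : Bool) :
    di u c' i = |t| * di u c i := by
  rw [di_eq, di_eq, h, norm_smul, Real.norm_eq_abs, mul_div_assoc]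

lemma dd_smul_pos {c c' : Config} {t : ℝ} (h : Δ c' = t • Δ c) (ht : 0 < t) (i : Bool) :
    dd u A c' i = dd u A c i := by
  rw [dd, dd, obsVec_smul u A h, obsDir_smul ht]

lemma delta_ne_zero {c : Config} {i : Bool} (hd : 0 < di u c i) :
    Δ c ≠ 0 := by
  intro h0
  rw [di_eq, h0, norm_zero, zero_div] at hd
  exact lt_irrefl _ hd

lemma obsVec_ne_zero {c : Config} (hu : 0 < u i) (hΔ : Δ c ≠ 0) :
    obsVec (u i) (A i) (c.pos i) (c.pos (!i)) ≠ 0 := by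
  rw [obsVec, sub_eq_delta]
  intro h
  apply hΔ
  have h2 : (A i) ((if i = true then (-1:ℝ) else 1) • Δ c) = 0 := by
    have := congrArg (fun w => u i • w) h
    simpa [smul_smul, mul_inv_cancel₀ hu.ne'] using this
  have h3 : ((if i = true then (-1:ℝ) else 1) • Δ c) = 0 := by
    have := (A i).injective (by simpa using h2)
    simpa using this
  cases i <;> simpa using h3

lemma dd_smul_neg {c c' : Config} (hu : 0 < u i) {t : ℝ} (h : Δ c' = t • Δ c)
    (ht : t < 0) (hΔ : Δ c ≠ 0) :
    dd u A c' i = dflip (dd u A c i) := by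
  rw [dd, dd, obsVec_smul u A h, obsDir_smul_neg ht (obsVec_ne_zero u A hu hΔ)]

lemma Config.ext' {c c' : Config} (h1 : ∀ i, c.pos i = c'.pos i)
    (h2 : ∀ i, c.st i = c'.st i) : c = c' := by
  cases c; cases c'
  simp only [Config.mk.injEq]
  exact ⟨funext h1, funext h2⟩

/-! ### coincidence -/

def coin (c : Config) : Prop := c.pos false = c.pos true

lemma coin_iff {c : Config} : coin c ↔ Δ c = 0 := by
  rw [coin, Δ, sub_eq_zero, eq_comm]

lemma di_pos {c : Config} (hu : 0 < u i) (h : ¬ coin c) : 0 < di u c i := by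
  rw [di_eq]
  apply div_pos _ hu
  rw [norm_pos_iff]
  exact fun h0 => h (coin_iff.mpr h0)

lemma coin_of_delta {c : Config} (h : Δ c = 0) : coin c := coin_iff.mpr h

lemma coin_step (act : Bool → Bool) {c : Config} (h : coin c) :
    stepConfig u A act c = c := by
  have hd : ∀ i, di u c i = 0 := by
    intro i
    rw [di_eq, coin_iff.mp h, norm_zero, zero_div]
  have hpos : ∀ i, (stepRobot u A c i).1 = c.pos i := by
    intro i
    rw [stepRobot_eq, hd, algo1_zero]
    simp [sub_eq_delta, coin_iff.mp h]
  have hst : ∀ i, (stepRobot u A c i).2 = c.st i := by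
    intro i
    rw [stepRobot_eq, hd, algo1_zero]
  apply Config.ext'
  · intro j
    rw [stepConfig_pos]
    by_cases hj : act j <;> simp [hj, hpos j]
  · intro j
    rw [stepConfig_st]
    by_cases hj : act j <;> simp [hj, hst j]

/-- A robot in `finish` state with observed distance `≤ 1` never does anything;
if the other robot is inactive the configuration is unchanged. -/
lemma frozen_step (act : Bool → Bool) {c : Config} {i : Bool}
    (hst : c.st i = .finish) (hd : di u c i ≤ 1) (hoff : act (!i) = false) :
    stepConfig u A act c = c := by
  have hpos : (stepRobot u A c i).1 = c.pos i := by
    rw [stepRobot_eq, hst, algo1_finish_le _ hd]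
    simp
  have hsti : (stepRobot u A c i).2 = c.st i := by
    rw [stepRobot_eq, hst, algo1_finish_le _ hd]
  apply Config.ext'
  · intro j
    by_cases hj : j = i
    · subst hj
      rw [stepConfig_pos]
      by_cases hi : act j <;> simp [hi, hpos]
    · have hji : j = !i := by cases i <;> cases j <;> simp_all
      subst hji
      rw [stepConfig_pos, hoff]
      rfl
  · intro j
    by_cases hj : j = i
    · subst hj
      rw [stepConfig_st]
      by_cases hi : act j <;> simp [hi, hsti]
    · have hji : j = !i := by cases i <;> cases j <;> simp_all
      subst hji
      rw [stepConfig_st, hoff]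
      rfl

/-! ### classes of configurations -/

/-- Robot `i` is in an `S₂` state whose recorded direction differs from the
currently observed one. -/
def isN (c : Config) (i : Bool) : Prop := c.st i = .s2 (dflip (dd u A c i))

/-- Robot `i` is in an `S₂` state whose recorded direction equals the
currently observed one. -/
def isE (c : Config) (i : Bool) : Prop := c.st i = .s2 (dd u A c i)

def clA (c : Config) : Prop :=
  isN u A c false ∧ isN u A c true ∧ (1/2 ≤ di u c false ∨ 1/2 ≤ di u c true)

def clB (c : Config) (i : Bool) : Prop :=
  c.st i = .s3 ∧ di u c i < 1/2 ∧ isN u A c (!i) ∧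
    (1/4 ≤ di u c i ∨ 1/2 ≤ di u c (!i))

def clC (c : Config) (i : Bool) : Prop :=
  c.st i = .finish ∧ di u c i ≤ 1 ∧ isN u A c (!i) ∧ 1/2 ≤ di u c (!i)

def clD (c : Config) (i : Bool) : Prop :=
  c.st i = .s3 ∧ di u c i < 1/4 ∧ c.st (!i) = .s3 ∧ 1/4 ≤ di u c (!i)

def clE (c : Config) (i : Bool) : Prop :=
  c.st i = .finish ∧ di u c i ≤ 1 ∧ c.st (!i) = .s3 ∧ 1/4 ≤ di u c (!i)

def clF (c : Config) (i : Bool) : Prop :=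
  c.st i = .finish ∧ di u c i ≤ 1 ∧ isE u A c (!i)

lemma algo1_of_isN {c : Config} {i : Bool} (h : isN u A c i) (hd : 0 < di u c i) :
    algo1 (c.st i) (di u c i) (dd u A c i) =
      if di u c i < 1/2 then (.finish, 0)
      else if di u c i < 1 then (.s3, 1/2)
      else (.s2 (dflip (dd u A c i)), 1/2) := by
  rw [h, algo1_s2ne _ hd]

lemma algo1_of_isE {c : Config} {i : Bool} (h : isE u A c i) (hd : 0 < di u c i) :
    algo1 (c.st i) (di u c i) (dd u A c i) = (.finish, 1) := by
  rw [h, algo1_s2eq _ hd]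

lemma mc_on {act : Bool → Bool} {c : Config} {i : Bool} (h : act i = true) :
    mc u A act c i = (algo1 (c.st i) (di u c i) (dd u A c i)).2 := by
  rw [mc, if_pos h]

lemma mc_off {act : Bool → Bool} {c : Config} {i : Bool} (h : act i = false) :
    mc u A act c i = 0 := by
  rw [mc, h]; rfl

lemma mc_sum (act : Bool → Bool) (c : Config) (i : Bool) :
    mc u A act c false + mc u A act c true = mc u A act c i + mc u A act c (!i) := by
  cases i
  · rfl
  · simp [add_comm]

lemma delta_step' (act : Bool → Bool) (c : Config) (i : Bool) :
    Δ (stepConfig u A act c) = (1 - mc u A act c i - mc u A act c (!i)) • Δ c := by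
  rw [delta_step]
  congr 1
  have := mc_sum u A act c i
  linarith

lemma di_half {c c' : Config} (hΔ : Δ c' = (2⁻¹ : ℝ) • Δ c) (j : Bool) :
    di u c' j = di u c j / 2 := by
  rw [di_smul u hΔ]
  rw [abs_of_pos (by norm_num)]
  ring

lemma di_same {c c' : Config} (hΔ : Δ c' = (1 : ℝ) • Δ c) (j : Bool) :
    di u c' j = di u c j := by
  rw [di_smul u hΔ, abs_one, one_mul]

lemma di_neghalf {c c' : Config} (hΔ : Δ c' = (-2⁻¹ : ℝ) • Δ c) (j : Bool) :
    di u c' j = di u c j / 2 := by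
  rw [di_smul u hΔ]
  rw [show |(-2⁻¹ : ℝ)| = 2⁻¹ by norm_num]
  ring

/-- A `finish` robot with distance `≤ 1` keeps its state. -/
lemma st_finish_keep {act : Bool → Bool} {c : Config} {i : Bool}
    (hFi : c.st i = .finish) (hdi : di u c i ≤ 1) :
    (stepConfig u A act c).st i = .finish := by
  cases hact : act i
  · rw [st_step_off u A act c i hact, hFi]
  · rw [st_step u A act c i hact, hFi, algo1_finish_le _ hdi]

lemma mc_finish {act : Bool → Bool} {c : Config} {i : Bool}
    (hFi : c.st i = .finish) (hdi : di u c i ≤ 1) :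
    mc u A act c i = 0 := by
  cases hact : act i
  · exact mc_off u A hact
  · rw [mc_on u A hact, hFi, algo1_finish_le _ hdi]

/-! ### one-round lemmas for the easy classes -/


lemma stepF_on (hu : ∀ j, 0 < u j) {act : Bool → Bool} {c : Config} {i : Bool}
    (hF : clF u A c i) (hj : act (!i) = true) :
    coin (stepConfig u A act c) := by
  obtain ⟨hFi, hdi, hEj⟩ := hF
  by_cases hco : coin c
  · rw [coin_step u A act hco]; exact hco
  · have hdj : 0 < di u c (!i) := di_pos u (hu (!i)) hco
    have hmj : mc u A act c (!i) = 1 := by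
      rw [mc_on u A hj, algo1_of_isE u A hEj hdj]
    have hmi : mc u A act c i = 0 := mc_finish u A hFi hdi
    apply coin_of_delta
    rw [delta_step' u A act c i, hmi, hmj]
    norm_num

lemma stepE_on {act : Bool → Bool} {c : Config} {i : Bool}
    (hE : clE u c i) (hj : act (!i) = true) :
    coin (stepConfig u A act c) := by
  obtain ⟨hFi, hdi, hSj, hdj⟩ := hE
  have hdjpos : 0 < di u c (!i) := lt_of_lt_of_le (by norm_num) hdj
  have hmj : mc u A act c (!i) = 1 := by
    rw [mc_on u A hj, hSj, algo1_s3 _ hdjpos, if_neg (by linarith)]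
  have hmi : mc u A act c i = 0 := mc_finish u A hFi hdi
  apply coin_of_delta
  rw [delta_step' u A act c i, hmi, hmj]
  norm_num

lemma stepD_on (hu : ∀ j, 0 < u j) {act : Bool → Bool} {c : Config} {i : Bool}
    (hD : clD u c i) (hj : act (!i) = true) :
    coin (stepConfig u A act c) := by
  obtain ⟨hSi, hdi, hSj, hdj⟩ := hD
  have hdjpos : 0 < di u c (!i) := lt_of_lt_of_le (by norm_num) hdj
  have hmj : mc u A act c (!i) = 1 := by
    rw [mc_on u A hj, hSj, algo1_s3 _ hdjpos, if_neg (by linarith)]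
  have hmi : mc u A act c i = 0 := by
    cases hact : act i
    · exact mc_off u A hact
    · have hge : (0:ℝ) ≤ di u c i := by
        rw [di_eq]
        exact div_nonneg (norm_nonneg _) (hu i).le
      rcases eq_or_lt_of_le hge with h0 | hpos
      · rw [mc_on u A hact, ← h0, algo1_zero]
      · rw [mc_on u A hact, hSi, algo1_s3 _ hpos, if_pos hdi]
  apply coin_of_delta
  rw [delta_step' u A act c i, hmi, hmj]
  norm_num

lemma stepD_off (hu : ∀ j, 0 < u j) {act : Bool → Bool} {c : Config} {i : Bool}
    (hD : clD u c i) (hj : act (!i) = false) (hi : act i = true) :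
    clE u (stepConfig u A act c) i := by
  obtain ⟨hSi, hdi, hSj, hdj⟩ := hD
  have hdipos : 0 < di u c i := di_pos u (hu i) (fun hco => by
    have := coin_iff.mp hco
    have h2 := di_eq u c (!i)
    rw [this, norm_zero, zero_div] at h2
    linarith)
  have hmi : mc u A act c i = 0 := by
    rw [mc_on u A hi, hSi, algo1_s3 _ hdipos, if_pos hdi]
  have hmj : mc u A act c (!i) = 0 := mc_off u A hj
  have hΔ : Δ (stepConfig u A act c) = (1 : ℝ) • Δ c := by
    rw [delta_step' u A act c i, hmi, hmj]; norm_num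
  refine ⟨?_, ?_, ?_, ?_⟩
  · rw [st_step u A act c i hi, hSi, algo1_s3 _ hdipos, if_pos hdi]
  · rw [di_same u hΔ]; linarith
  · rw [st_step_off u A act c (!i) hj, hSj]
  · rw [di_same u hΔ]; exact hdj

/-! ### one-round lemmas for class C -/

lemma di_pos_of {c : Config} (hu : ∀ j, 0 < u j) {j : Bool} (h : 0 < di u c j)
    (i : Bool) : 0 < di u c i := by
  rw [di_eq] at h ⊢
  exact div_pos ((div_pos_iff.mp h).resolve_right (fun ⟨_, h2⟩ => absurd (hu j) (by linarith))).1 (hu i)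

lemma stepC_on (hu : ∀ j, 0 < u j) {act : Bool → Bool} {c : Config} {i : Bool}
    (hC : clC u A c i) (hj : act (!i) = true) :
    (clC u A (stepConfig u A act c) i ∧
      di u (stepConfig u A act c) (!i) = di u c (!i) / 2) ∨
      clE u (stepConfig u A act c) i := by
  obtain ⟨hFi, hdi, hNj, hdj⟩ := hC
  have hdjpos : 0 < di u c (!i) := lt_of_lt_of_le (by norm_num) hdj
  have halg := algo1_of_isN u A hNj hdjpos
  rw [if_neg (by intro h; linarith)] at halg
  have hmi : mc u A act c i = 0 := mc_finish u A hFi hdi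
  by_cases hbig : 1 ≤ di u c (!i)
  · rw [if_neg (not_lt.mpr hbig)] at halg
    have hmj : mc u A act c (!i) = 1/2 := by rw [mc_on u A hj, halg]
    have hΔ : Δ (stepConfig u A act c) = (2⁻¹ : ℝ) • Δ c := by
      rw [delta_step' u A act c i, hmi, hmj]; norm_num
    left
    refine ⟨⟨st_finish_keep u A hFi hdi, ?_, ?_, ?_⟩, di_half u hΔ (!i)⟩
    · rw [di_half u hΔ]; linarith
    · rw [isN, st_step u A act c (!i) hj, halg, dd_smul_pos u A hΔ (by norm_num)]
    · rw [di_half u hΔ]; linarith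
  · rw [if_pos (lt_of_not_ge hbig)] at halg
    have hmj : mc u A act c (!i) = 1/2 := by rw [mc_on u A hj, halg]
    have hΔ : Δ (stepConfig u A act c) = (2⁻¹ : ℝ) • Δ c := by
      rw [delta_step' u A act c i, hmi, hmj]; norm_num
    right
    refine ⟨st_finish_keep u A hFi hdi, ?_, ?_, ?_⟩
    · rw [di_half u hΔ]; linarith
    · rw [st_step u A act c (!i) hj, halg]
    · rw [di_half u hΔ]; linarith

/-! ### one-round lemmas for class B -/

lemma stepB_off (hu : ∀ j, 0 < u j) {act : Bool → Bool} {c : Config} {i : Bool}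
    (hB : clB u A c i) (hi : act i = false) (hj : act (!i) = true) :
    clB u A (stepConfig u A act c) i ∨ clD u (stepConfig u A act c) i ∨
      clE u (stepConfig u A act c) (!i) := by
  obtain ⟨hSi, hdi, hNj, hdisj⟩ := hB
  have hmi : mc u A act c i = 0 := mc_off u A hi
  by_cases hjs : di u c (!i) < 1/2
  · -- the s2 robot freezes; distances unchanged
    have hd4 : 1/4 ≤ di u c i := hdisj.resolve_right (by intro h; linarith)
    have hdjpos : 0 < di u c (!i) := di_pos_of u hu (lt_of_lt_of_le (by norm_num) hd4) _
    have halg := algo1_of_isN u A hNj hdjpos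
    rw [if_pos hjs] at halg
    have hmj : mc u A act c (!i) = 0 := by rw [mc_on u A hj, halg]
    have hΔ : Δ (stepConfig u A act c) = (1 : ℝ) • Δ c := by
      rw [delta_step' u A act c i, hmi, hmj]; norm_num
    right; right
    refine ⟨?_, ?_, ?_, ?_⟩
    · rw [st_step u A act c (!i) hj, halg]
    · rw [di_same u hΔ]; linarith
    · rw [Bool.not_not, st_step_off u A act c i hi, hSi]
    · rw [Bool.not_not, di_same u hΔ]; exact hd4
  · have hdjpos : 0 < di u c (!i) := lt_of_lt_of_le (by norm_num) (not_lt.mp hjs)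
    have halg := algo1_of_isN u A hNj hdjpos
    rw [if_neg hjs] at halg
    by_cases hbig : 1 ≤ di u c (!i)
    · rw [if_neg (not_lt.mpr hbig)] at halg
      have hmj : mc u A act c (!i) = 1/2 := by rw [mc_on u A hj, halg]
      have hΔ : Δ (stepConfig u A act c) = (2⁻¹ : ℝ) • Δ c := by
        rw [delta_step' u A act c i, hmi, hmj]; norm_num
      left
      refine ⟨?_, ?_, ?_, ?_⟩
      · rw [st_step_off u A act c i hi, hSi]
      · rw [di_half u hΔ]; linarith
      · rw [isN, st_step u A act c (!i) hj, halg, dd_smul_pos u A hΔ (by norm_num)]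
      · right; rw [di_half u hΔ]; linarith
    · rw [if_pos (lt_of_not_ge hbig)] at halg
      have hmj : mc u A act c (!i) = 1/2 := by rw [mc_on u A hj, halg]
      have hΔ : Δ (stepConfig u A act c) = (2⁻¹ : ℝ) • Δ c := by
        rw [delta_step' u A act c i, hmi, hmj]; norm_num
      right; left
      refine ⟨?_, ?_, ?_, ?_⟩
      · rw [st_step_off u A act c i hi, hSi]
      · rw [di_half u hΔ]; linarith
      · rw [st_step u A act c (!i) hj, halg]
      · rw [di_half u hΔ]; linarith

lemma stepB_on (hu : ∀ j, 0 < u j) {act : Bool → Bool} {c : Config} {i : Bool}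
    (hB : clB u A c i) (hi : act i = true) :
    coin (stepConfig u A act c) ∨ clC u A (stepConfig u A act c) i ∨
      clE u (stepConfig u A act c) i ∨ clF u A (stepConfig u A act c) i := by
  obtain ⟨hSi, hdi, hNj, hdisj⟩ := hB
  have hLpos : 0 < di u c i := by
    rcases hdisj with h | h
    · linarith
    · exact di_pos_of u hu (lt_of_lt_of_le (by norm_num) h) _
  have hdjpos : 0 < di u c (!i) := di_pos_of u hu hLpos _
  by_cases hsmall : di u c i < 1/4
  · -- the s3 robot freezes and becomes finish
    have hdj2 : 1/2 ≤ di u c (!i) := hdisj.resolve_left (by intro h; linarith)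
    have hmi : mc u A act c i = 0 := by
      rw [mc_on u A hi, hSi, algo1_s3 _ hLpos, if_pos hsmall]
    have hsti : (stepConfig u A act c).st i = .finish := by
      rw [st_step u A act c i hi, hSi, algo1_s3 _ hLpos, if_pos hsmall]
    cases hj : act (!i)
    · have hmj : mc u A act c (!i) = 0 := mc_off u A hj
      have hΔ : Δ (stepConfig u A act c) = (1 : ℝ) • Δ c := by
        rw [delta_step' u A act c i, hmi, hmj]; norm_num
      right; left
      refine ⟨hsti, ?_, ?_, ?_⟩
      · rw [di_same u hΔ]; linarith
      · rw [isN, st_step_off u A act c (!i) hj, hNj, dd_smul_pos u A hΔ (by norm_num)]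
      · rw [di_same u hΔ]; exact hdj2
    · have halg := algo1_of_isN u A hNj hdjpos
      rw [if_neg (by intro h; linarith)] at halg
      by_cases hbig : 1 ≤ di u c (!i)
      · rw [if_neg (not_lt.mpr hbig)] at halg
        have hmj : mc u A act c (!i) = 1/2 := by rw [mc_on u A hj, halg]
        have hΔ : Δ (stepConfig u A act c) = (2⁻¹ : ℝ) • Δ c := by
          rw [delta_step' u A act c i, hmi, hmj]; norm_num
        right; left
        refine ⟨hsti, ?_, ?_, ?_⟩
        · rw [di_half u hΔ]; linarith
        · rw [isN, st_step u A act c (!i) hj, halg, dd_smul_pos u A hΔ (by norm_num)]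
        · rw [di_half u hΔ]; linarith
      · rw [if_pos (lt_of_not_ge hbig)] at halg
        have hmj : mc u A act c (!i) = 1/2 := by rw [mc_on u A hj, halg]
        have hΔ : Δ (stepConfig u A act c) = (2⁻¹ : ℝ) • Δ c := by
          rw [delta_step' u A act c i, hmi, hmj]; norm_num
        right; right; left
        refine ⟨hsti, ?_, ?_, ?_⟩
        · rw [di_half u hΔ]; linarith
        · rw [st_step u A act c (!i) hj, halg]
        · rw [di_half u hΔ]; linarith
  · -- the s3 robot jumps onto the other one
    have hmi : mc u A act c i = 1 := by
      rw [mc_on u A hi, hSi, algo1_s3 _ hLpos, if_neg hsmall]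
    have hsti : (stepConfig u A act c).st i = .finish := by
      rw [st_step u A act c i hi, hSi, algo1_s3 _ hLpos, if_neg hsmall]
    cases hj : act (!i)
    · have hmj : mc u A act c (!i) = 0 := mc_off u A hj
      left
      apply coin_of_delta
      rw [delta_step' u A act c i, hmi, hmj]
      norm_num
    · by_cases hjs : di u c (!i) < 1/2
      · have halg := algo1_of_isN u A hNj hdjpos
        rw [if_pos hjs] at halg
        have hmj : mc u A act c (!i) = 0 := by rw [mc_on u A hj, halg]
        left
        apply coin_of_delta
        rw [delta_step' u A act c i, hmi, hmj]
        norm_num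
      · have halg := algo1_of_isN u A hNj hdjpos
        rw [if_neg hjs] at halg
        by_cases hbig : 1 ≤ di u c (!i)
        · rw [if_neg (not_lt.mpr hbig)] at halg
          have hmj : mc u A act c (!i) = 1/2 := by rw [mc_on u A hj, halg]
          have hΔ : Δ (stepConfig u A act c) = (-2⁻¹ : ℝ) • Δ c := by
            rw [delta_step' u A act c i, hmi, hmj]; norm_num
          right; right; right
          refine ⟨hsti, ?_, ?_⟩
          · rw [di_neghalf u hΔ]; linarith
          · rw [isE, st_step u A act c (!i) hj, halg,
              dd_smul_neg u A (hu (!i)) hΔ (by norm_num) (delta_ne_zero u hLpos)]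
        · rw [if_pos (lt_of_not_ge hbig)] at halg
          have hmj : mc u A act c (!i) = 1/2 := by rw [mc_on u A hj, halg]
          have hΔ : Δ (stepConfig u A act c) = (-2⁻¹ : ℝ) • Δ c := by
            rw [delta_step' u A act c i, hmi, hmj]; norm_num
          right; right; left
          refine ⟨hsti, ?_, ?_, ?_⟩
          · rw [di_neghalf u hΔ]; linarith
          · rw [st_step u A act c (!i) hj, halg]
          · rw [di_neghalf u hΔ]; linarith

/-! ### one-round lemmas for class A -/

lemma clA_intro {c : Config} (i : Bool) (h1 : isN u A c i) (h2 : isN u A c (!i))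
    (h3 : 1/2 ≤ di u c i) : clA u A c := by
  cases i
  · exact ⟨h1, h2, Or.inl h3⟩
  · exact ⟨h2, h1, Or.inr h3⟩

lemma clA_elim {c : Config} (hA : clA u A c) (i : Bool) :
    isN u A c i ∧ isN u A c (!i) ∧ (1/2 ≤ di u c i ∨ 1/2 ≤ di u c (!i)) := by
  obtain ⟨h1, h2, h3⟩ := hA
  cases i
  · exact ⟨h1, h2, h3⟩
  · exact ⟨h2, h1, h3.symm⟩

lemma mc_isN_half {act : Bool → Bool} {c : Config} {i : Bool} (hN : isN u A c i)
    (hd : 1/2 ≤ di u c i) (hact : act i = true) : mc u A act c i = 1/2 := by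
  have hpos : 0 < di u c i := lt_of_lt_of_le (by norm_num) hd
  rw [mc_on u A hact, algo1_of_isN u A hN hpos]
  split_ifs with h1 h2
  · linarith
  · rfl
  · rfl

/-- A single active robot in class A, with distance at least 1/2. -/
lemma stepA_single {act : Bool → Bool} {c : Config} {i : Bool}
    (hNi : isN u A c i) (hNj : isN u A c (!i)) (hi : act i = true)
    (hj : act (!i) = false) (hdi : 1/2 ≤ di u c i) :
    (clA u A (stepConfig u A act c) ∧
      (∀ j, di u (stepConfig u A act c) j = di u c j / 2)) ∨
      clB u A (stepConfig u A act c) i := by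
  have hpos : 0 < di u c i := lt_of_lt_of_le (by norm_num) hdi
  have halg := algo1_of_isN u A hNi hpos
  rw [if_neg (by intro h; linarith)] at halg
  have hmi : mc u A act c i = 1/2 := mc_isN_half u A hNi hdi hi
  have hmj : mc u A act c (!i) = 0 := mc_off u A hj
  have hΔ : Δ (stepConfig u A act c) = (2⁻¹ : ℝ) • Δ c := by
    rw [delta_step' u A act c i, hmi, hmj]; norm_num
  have hNj' : isN u A (stepConfig u A act c) (!i) := by
    rw [isN, st_step_off u A act c (!i) hj, hNj, dd_smul_pos u A hΔ (by norm_num)]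
  by_cases hbig : 1 ≤ di u c i
  · rw [if_neg (not_lt.mpr hbig)] at halg
    left
    constructor
    · refine clA_intro u A i ?_ hNj' ?_
      · rw [isN, st_step u A act c i hi, halg, dd_smul_pos u A hΔ (by norm_num)]
      · rw [di_half u hΔ]; linarith
    · exact fun j => di_half u hΔ j
  · rw [if_pos (lt_of_not_ge hbig)] at halg
    right
    refine ⟨?_, ?_, hNj', ?_⟩
    · rw [st_step u A act c i hi, halg]
    · rw [di_half u hΔ]; linarith
    · left; rw [di_half u hΔ]; linarith

/-- A single active robot in class A with distance below 1/2 (the other robot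
then has distance at least 1/2). -/
lemma stepA_single_small (hu : ∀ j, 0 < u j) {act : Bool → Bool} {c : Config} {i : Bool}
    (hNi : isN u A c i) (hNj : isN u A c (!i)) (hi : act i = true)
    (hj : act (!i) = false) (hdi : di u c i < 1/2) (hdj : 1/2 ≤ di u c (!i)) :
    clC u A (stepConfig u A act c) i := by
  have hpos : 0 < di u c i :=
    di_pos_of u hu (lt_of_lt_of_le (by norm_num) hdj : (0:ℝ) < di u c (!i)) i
  have halg := algo1_of_isN u A hNi hpos
  rw [if_pos hdi] at halg
  have hmi : mc u A act c i = 0 := by rw [mc_on u A hi, halg]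
  have hmj : mc u A act c (!i) = 0 := mc_off u A hj
  have hΔ : Δ (stepConfig u A act c) = (1 : ℝ) • Δ c := by
    rw [delta_step' u A act c i, hmi, hmj]; norm_num
  refine ⟨?_, ?_, ?_, ?_⟩
  · rw [st_step u A act c i hi, halg]
  · rw [di_same u hΔ]; linarith
  · rw [isN, st_step_off u A act c (!i) hj, hNj, dd_smul_pos u A hΔ (by norm_num)]
  · rw [di_same u hΔ]; exact hdj

/-- Both robots active in class A, the small one having distance below 1/2. -/
lemma stepA_both_small (hu : ∀ j, 0 < u j) {act : Bool → Bool} {c : Config} {i : Bool}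
    (hNi : isN u A c i) (hNj : isN u A c (!i)) (hi : act i = true)
    (hj : act (!i) = true) (hdi : di u c i < 1/2) (hdj : 1/2 ≤ di u c (!i)) :
    clC u A (stepConfig u A act c) i ∨ clE u (stepConfig u A act c) i := by
  have hdjpos : 0 < di u c (!i) := lt_of_lt_of_le (by norm_num) hdj
  have hpos : 0 < di u c i := di_pos_of u hu hdjpos i
  have halgi := algo1_of_isN u A hNi hpos
  rw [if_pos hdi] at halgi
  have hmi : mc u A act c i = 0 := by rw [mc_on u A hi, halgi]
  have hsti : (stepConfig u A act c).st i = .finish := by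
    rw [st_step u A act c i hi, halgi]
  have halg := algo1_of_isN u A hNj hdjpos
  rw [if_neg (by intro h; linarith)] at halg
  by_cases hbig : 1 ≤ di u c (!i)
  · rw [if_neg (not_lt.mpr hbig)] at halg
    have hmj : mc u A act c (!i) = 1/2 := by rw [mc_on u A hj, halg]
    have hΔ : Δ (stepConfig u A act c) = (2⁻¹ : ℝ) • Δ c := by
      rw [delta_step' u A act c i, hmi, hmj]; norm_num
    left
    refine ⟨hsti, ?_, ?_, ?_⟩
    · rw [di_half u hΔ]; linarith
    · rw [isN, st_step u A act c (!i) hj, halg, dd_smul_pos u A hΔ (by norm_num)]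
    · rw [di_half u hΔ]; linarith
  · rw [if_pos (lt_of_not_ge hbig)] at halg
    have hmj : mc u A act c (!i) = 1/2 := by rw [mc_on u A hj, halg]
    have hΔ : Δ (stepConfig u A act c) = (2⁻¹ : ℝ) • Δ c := by
      rw [delta_step' u A act c i, hmi, hmj]; norm_num
    right
    refine ⟨hsti, ?_, ?_, ?_⟩
    · rw [di_half u hΔ]; linarith
    · rw [st_step u A act c (!i) hj, halg]
    · rw [di_half u hΔ]; linarith

lemma stepA (hu : ∀ j, 0 < u j) {act : Bool → Bool} {c : Config}
    (hA : clA u A c) (hact : act false = true ∨ act true = true) :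
    coin (stepConfig u A act c) ∨
      (clA u A (stepConfig u A act c) ∧
        (∀ j, di u (stepConfig u A act c) j = di u c j / 2)) ∨
      (∃ i, clB u A (stepConfig u A act c) i) ∨
      (∃ i, clC u A (stepConfig u A act c) i) ∨
      (∃ i, clE u (stepConfig u A act c) i) := by
  obtain ⟨hN0, hN1, hdisj⟩ := hA
  cases hf : act false <;> cases ht : act true
  · rw [hf, ht] at hact; simp at hact
  · -- only robot true active
    by_cases h : 1/2 ≤ di u c true
    · rcases stepA_single u A (i := true) hN1 hN0 ht hf h with h' | h'
      · exact Or.inr (Or.inl h')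
      · exact Or.inr (Or.inr (Or.inl ⟨true, h'⟩))
    · have hd0 : 1/2 ≤ di u c false := hdisj.resolve_right h
      exact Or.inr (Or.inr (Or.inr (Or.inl
        ⟨true, stepA_single_small u A hu (i := true) hN1 hN0 ht hf (lt_of_not_ge h) hd0⟩)))
  · -- only robot false active
    by_cases h : 1/2 ≤ di u c false
    · rcases stepA_single u A (i := false) hN0 hN1 hf ht h with h' | h'
      · exact Or.inr (Or.inl h')
      · exact Or.inr (Or.inr (Or.inl ⟨false, h'⟩))
    · have hd1 : 1/2 ≤ di u c true := hdisj.resolve_left h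
      exact Or.inr (Or.inr (Or.inr (Or.inl
        ⟨false, stepA_single_small u A hu (i := false) hN0 hN1 hf ht (lt_of_not_ge h) hd1⟩)))
  · -- both active
    by_cases h0 : 1/2 ≤ di u c false
    · by_cases h1 : 1/2 ≤ di u c true
      · left
        apply coin_of_delta
        rw [delta_step, mc_isN_half u A hN0 h0 hf, mc_isN_half u A hN1 h1 ht]
        norm_num
      · rcases stepA_both_small u A hu (i := true) hN1 hN0 ht hf (lt_of_not_ge h1) h0 with h' | h'
        · exact Or.inr (Or.inr (Or.inr (Or.inl ⟨true, h'⟩)))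
        · exact Or.inr (Or.inr (Or.inr (Or.inr ⟨true, h'⟩)))
    · have h1 : 1/2 ≤ di u c true := hdisj.resolve_left h0
      rcases stepA_both_small u A hu (i := false) hN0 hN1 hf ht (lt_of_not_ge h0) h1 with h' | h'
      · exact Or.inr (Or.inr (Or.inr (Or.inl ⟨false, h'⟩)))
      · exact Or.inr (Or.inr (Or.inr (Or.inr ⟨false, h'⟩)))

/-! ### run-level termination -/

section Runs

variable (sched : ℕ → Bool → Bool) (c0 : Config)

local notation "R" => run u A sched c0

lemma run_succ (n : ℕ) : R (n+1) = stepConfig u A (sched n) (R n) := rfl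

lemma run_of_coin {N : ℕ} (h : coin (R N)) : ∀ n, N ≤ n → R n = R N := by
  intro n hn
  induction n, hn using Nat.le_induction with
  | base => rfl
  | succ n hn ih =>
      rw [run_succ, ih, coin_step u A _ h]

lemma solves_of_coin {N : ℕ} (h : coin (R N)) : Solves u A sched c0 := by
  refine ⟨N, fun n hn i => ?_⟩
  rw [run_of_coin u A sched c0 h n hn]
  cases i
  · rfl
  · exact h.symm

lemma act_other (hFair : FairSched sched) {n : ℕ} {i : Bool}
    (hoff : sched n (!i) = false) : sched n i = true := by
  rcases hFair.1 n with h | h <;> cases i <;> simp_all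

/-- Generic waiting lemma: `P` survives rounds in which robot `i` is inactive
and turns into `Q` as soon as robot `i` is activated. -/
lemma until_act (hFair : FairSched sched) {i : Bool} {P Q : ℕ → Prop}
    (h1 : ∀ n, P n → sched n i = false → P (n+1) ∨ Q (n+1))
    (h2 : ∀ n, P n → sched n i = true → Q (n+1)) :
    ∀ n, P n → ∃ m, n ≤ m ∧ Q m := by
  have key : ∀ k n m, n ≤ m → m - n ≤ k → sched m i = true → P n →
      ∃ m', n ≤ m' ∧ Q m' := by
    intro k
    induction k with
    | zero =>
        intro n m hnm hk hact hP
        have : m = n := le_antisymm (by omega) hnm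
        subst this
        exact ⟨m + 1, Nat.le_succ m, h2 m hP hact⟩
    | succ k ih =>
        intro n m hnm hk hact hP
        cases hn : sched n i
        · rcases h1 n hP hn with hP' | hQ'
          · have hne : n ≠ m := fun h => by rw [h, hact] at hn; cases hn
            rcases ih (n+1) m (by omega) (by omega) hact hP' with ⟨m', hm', hQ⟩
            exact ⟨m', by omega, hQ⟩
          · exact ⟨n + 1, Nat.le_succ n, hQ'⟩
        · exact ⟨n + 1, Nat.le_succ n, h2 n hP hn⟩
  intro n hP
  obtain ⟨m, hnm, hact⟩ := hFair.2 i n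
  exact key (m - n) n m hnm le_rfl hact hP

variable (hFair : FairSched sched) (hu : ∀ j, 0 < u j)

lemma coin_of_F (hFair : FairSched sched) (hu : ∀ j, 0 < u j) :
    ∀ n (i : Bool), clF u A (R n) i → ∃ m, n ≤ m ∧ coin (R m) := by
  intro n i
  apply until_act sched hFair (i := !i)
    (P := fun n => clF u A (R n) i) (Q := fun n => coin (R n))
  · intro n hP hoff
    left
    show clF u A (stepConfig u A (sched n) (R n)) i
    rw [frozen_step u A _ hP.1 hP.2.1 hoff]
    exact hP
  · intro n hP hact
    exact stepF_on u A hu hP hact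

lemma coin_of_E (hFair : FairSched sched) :
    ∀ n (i : Bool), clE u (R n) i → ∃ m, n ≤ m ∧ coin (R m) := by
  intro n i
  apply until_act sched hFair (i := !i)
    (P := fun n => clE u (R n) i) (Q := fun n => coin (R n))
  · intro n hP hoff
    left
    show clE u (stepConfig u A (sched n) (R n)) i
    rw [frozen_step u A _ hP.1 hP.2.1 hoff]
    exact hP
  · intro n hP hact
    exact stepE_on u A hP hact

lemma coin_of_D (hFair : FairSched sched) (hu : ∀ j, 0 < u j) (n : ℕ) (i : Bool)
    (hD : clD u (R n) i) : ∃ m, n ≤ m ∧ coin (R m) := by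
  cases hj : sched n (!i)
  · have hi : sched n i = true := act_other sched hFair hj
    have hE : clE u (R (n+1)) i := stepD_off u A hu hD hj hi
    rcases coin_of_E u A sched c0 hFair (n+1) i hE with ⟨m, hm, hc⟩
    exact ⟨m, by omega, hc⟩
  · exact ⟨n + 1, Nat.le_succ n, stepD_on u A hu hD hj⟩

lemma coin_of_C (hFair : FairSched sched) (hu : ∀ j, 0 < u j) :
    ∀ (k : ℕ) (n : ℕ) (i : Bool), clC u A (R n) i →
      di u (R n) (!i) < 2 ^ k → ∃ m, n ≤ m ∧ coin (R m) := by
  intro k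
  induction k with
  | zero =>
      intro n i hC hbound
      obtain ⟨m, hnm, hQ⟩ := until_act sched hFair (i := !i)
        (P := fun n => clC u A (R n) i ∧ di u (R n) (!i) < 2 ^ 0)
        (Q := fun m => clE u (R m) i ∨
          (clC u A (R m) i ∧ di u (R m) (!i) < 1/2))
        (h1 := by
          intro n hP hoff
          left
          show clC u A (stepConfig u A (sched n) (R n)) i ∧
            di u (stepConfig u A (sched n) (R n)) (!i) < 2 ^ 0
          rw [frozen_step u A _ hP.1.1 hP.1.2.1 hoff]
          exact hP)
        (h2 := by
          intro n hP hact
          rcases stepC_on u A hu hP.1 hact with ⟨hC', hhalf⟩ | hE'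
          · right
            refine ⟨hC', ?_⟩
            show di u (stepConfig u A (sched n) (R n)) (!i) < 1/2
            rw [hhalf]
            have h0 := hP.2
            norm_num at h0 ⊢
            linarith
          · exact Or.inl hE')
        n ⟨hC, hbound⟩
      rcases hQ with hE | ⟨hC', hb⟩
      · rcases coin_of_E u A sched c0 hFair m i hE with ⟨m', hm', hc⟩
        exact ⟨m', by omega, hc⟩
      · exact absurd hC'.2.2.2 (by linarith)
  | succ k ih =>
      intro n i hC hbound
      obtain ⟨m, hnm, hQ⟩ := until_act sched hFair (i := !i)
        (P := fun n => clC u A (R n) i ∧ di u (R n) (!i) < 2 ^ (k+1))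
        (Q := fun m => clE u (R m) i ∨
          (clC u A (R m) i ∧ di u (R m) (!i) < 2 ^ k))
        (h1 := by
          intro n hP hoff
          left
          show clC u A (stepConfig u A (sched n) (R n)) i ∧
            di u (stepConfig u A (sched n) (R n)) (!i) < 2 ^ (k+1)
          rw [frozen_step u A _ hP.1.1 hP.1.2.1 hoff]
          exact hP)
        (h2 := by
          intro n hP hact
          rcases stepC_on u A hu hP.1 hact with ⟨hC', hhalf⟩ | hE'
          · right
            refine ⟨hC', ?_⟩
            show di u (stepConfig u A (sched n) (R n)) (!i) < 2 ^ k
            rw [hhalf]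
            have h0 := hP.2
            have h2k : (2:ℝ) ^ (k+1) = 2 * 2 ^ k := by ring
            linarith
          · exact Or.inl hE')
        n ⟨hC, hbound⟩
      rcases hQ with hE | ⟨hC', hb⟩
      · rcases coin_of_E u A sched c0 hFair m i hE with ⟨m', hm', hc⟩
        exact ⟨m', by omega, hc⟩
      · rcases ih m i hC' hb with ⟨m', hm', hc⟩
        exact ⟨m', by omega, hc⟩

end Runs

section Runs2

variable (sched : ℕ → Bool → Bool) (c0 : Config)

local notation "R" => run u A sched c0

lemma coin_of_B (hFair : FairSched sched) (hu : ∀ j, 0 < u j) (n : ℕ) (i : Bool)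
    (hB : clB u A (R n) i) : ∃ m, n ≤ m ∧ coin (R m) := by
  obtain ⟨m, hnm, hQ⟩ := until_act sched hFair (i := i)
    (P := fun n => clB u A (R n) i)
    (Q := fun m => coin (R m) ∨ clC u A (R m) i ∨ clD u (R m) i ∨
      clE u (R m) i ∨ clE u (R m) (!i) ∨ clF u A (R m) i)
    (h1 := by
      intro n hP hoff
      have hj : sched n (!i) = true :=
        act_other sched hFair (i := !i) (by simpa using hoff)
      rcases stepB_off u A hu hP hoff hj with h | h | h
      · exact Or.inl h
      · exact Or.inr (Or.inr (Or.inr (Or.inl h)))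
      · exact Or.inr (Or.inr (Or.inr (Or.inr (Or.inr (Or.inl h))))))
    (h2 := by
      intro n hP hact
      rcases stepB_on u A hu hP hact with h | h | h | h
      · exact Or.inl h
      · exact Or.inr (Or.inl h)
      · exact Or.inr (Or.inr (Or.inr (Or.inl h)))
      · exact Or.inr (Or.inr (Or.inr (Or.inr (Or.inr h)))))
    n hB
  have lift : ∀ m', m ≤ m' → coin (R m') → ∃ m'', n ≤ m'' ∧ coin (R m'') :=
    fun m' hm' hc => ⟨m', by omega, hc⟩
  rcases hQ with h | h | h | h | h | h
  · exact ⟨m, by omega, h⟩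
  · obtain ⟨k, hk⟩ := pow_unbounded_of_one_lt (di u (R m) (!i)) (one_lt_two (α := ℝ))
    obtain ⟨m', hm', hc⟩ := coin_of_C u A sched c0 hFair hu k m i h hk
    exact lift m' hm' hc
  · obtain ⟨m', hm', hc⟩ := coin_of_D u A sched c0 hFair hu m i h
    exact lift m' hm' hc
  · obtain ⟨m', hm', hc⟩ := coin_of_E u A sched c0 hFair m i h
    exact lift m' hm' hc
  · obtain ⟨m', hm', hc⟩ := coin_of_E u A sched c0 hFair m (!i) h
    exact lift m' hm' hc
  · obtain ⟨m', hm', hc⟩ := coin_of_F u A sched c0 hFair hu m i h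
    exact lift m' hm' hc

lemma coin_of_A (hFair : FairSched sched) (hu : ∀ j, 0 < u j) :
    ∀ (k : ℕ) (n : ℕ), clA u A (R n) →
      di u (R n) false < 2 ^ k / 2 → di u (R n) true < 2 ^ k / 2 →
      ∃ m, n ≤ m ∧ coin (R m) := by
  intro k
  induction k with
  | zero =>
      intro n hA h0 h1
      exfalso
      rcases hA.2.2 with h | h
      · norm_num at h0; linarith
      · norm_num at h1; linarith
  | succ k ih =>
      intro n hA h0 h1
      rcases stepA u A hu hA (hFair.1 n) with hc | ⟨hA', hhalf⟩ | ⟨i, hB⟩ | ⟨i, hC⟩ | ⟨i, hE⟩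
      · exact ⟨n + 1, Nat.le_succ n, hc⟩
      · have h2k : (2:ℝ) ^ (k+1) = 2 * 2 ^ k := by ring
        obtain ⟨m, hm, hc⟩ := ih (n+1) hA'
          (by rw [show di u (R (n+1)) false = di u (R n) false / 2 from hhalf false]; linarith)
          (by rw [show di u (R (n+1)) true = di u (R n) true / 2 from hhalf true]; linarith)
        exact ⟨m, by omega, hc⟩
      · obtain ⟨m, hm, hc⟩ := coin_of_B u A sched c0 hFair hu (n+1) i hB
        exact ⟨m, by omega, hc⟩
      · obtain ⟨k', hk'⟩ :=
          pow_unbounded_of_one_lt (di u (R (n+1)) (!i)) (one_lt_two (α := ℝ))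
        obtain ⟨m, hm, hc⟩ := coin_of_C u A sched c0 hFair hu k' (n+1) i hC hk'
        exact ⟨m, by omega, hc⟩
      · obtain ⟨m, hm, hc⟩ := coin_of_E u A sched c0 hFair (n+1) i hE
        exact ⟨m, by omega, hc⟩

end Runs2

end L2

/-- Lemma 8: `(S_2^≠, S_2^≠, [1, ∞), [1, ∞))↓`. -/
theorem lemma_l2 :
    Down Cond.s2ne Cond.s2ne (Set.Ici (1 : ℝ)) (Set.Ici (1 : ℝ)) := by
  intro u A hu c0 hsat0 hd0 hsat1 hd1 sched hFair
  have hdd0 : L2.dd u A c0 false =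
      obsDir (obsVec (u false) (A false) (c0.pos false) (c0.pos true)) := rfl
  have hdd1 : L2.dd u A c0 true =
      obsDir (obsVec (u true) (A true) (c0.pos true) (c0.pos false)) := rfl
  have hdi0 : L2.di u c0 false = obsDist (u false) (c0.pos false) (c0.pos true) := rfl
  have hdi1 : L2.di u c0 true = obsDist (u true) (c0.pos true) (c0.pos false) := rfl
  have h10 : (1:ℝ) ≤ L2.di u c0 false := by rw [hdi0]; exact hd0
  have h11 : (1:ℝ) ≤ L2.di u c0 true := by rw [hdi1]; exact hd1
  have hA : L2.clA u A c0 := by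
    obtain ⟨e0, hst0, hne0⟩ := hsat0
    obtain ⟨e1, hst1, hne1⟩ := hsat1
    refine ⟨?_, ?_, Or.inl (by linarith)⟩
    · rw [L2.isN, hst0, hdd0, L2.dir_ne_iff.mp hne0]
    · rw [L2.isN, hst1, hdd1, L2.dir_ne_iff.mp hne1]
  have hA0 : L2.clA u A (run u A sched c0 0) := hA
  obtain ⟨k0, hk0⟩ := pow_unbounded_of_one_lt
    (2 * L2.di u (run u A sched c0 0) false) (one_lt_two (α := ℝ))
  obtain ⟨k1, hk1⟩ := pow_unbounded_of_one_lt
    (2 * L2.di u (run u A sched c0 0) true) (one_lt_two (α := ℝ))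
  have hmono : (2:ℝ) ^ k0 ≤ 2 ^ (k0 + k1) := by
    apply pow_le_pow_right₀ (by norm_num)
    omega
  have hmono' : (2:ℝ) ^ k1 ≤ 2 ^ (k0 + k1) := by
    apply pow_le_pow_right₀ (by norm_num)
    omega
  obtain ⟨m, _, hc⟩ := L2.coin_of_A u A sched c0 hFair hu (k0 + k1) 0 hA0
    (by linarith) (by linarith)
  exact L2.solves_of_coin u A sched c0 hc
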